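/- Let O_X = K[Y,Z,T,U₁,U₂]/I where I = (Z²−YT, ZT−YU₁, Y⁴−ZU₂, T²−ZU₁, Y³Z−TU₂, Y³T−U₁U₂), and let I_D = (z²−y³, t−y², u₁−yz, u₂−yz) ⊆ O_X (lowercase letters denoting images of the variables). Then I_D is a prime ideal of O_X; it is the ideal of the point [1,1,1,1,1] of Proj O_X ⊆ P(2,3,4,5,5). -/

import Mathlib

open MvPolynomial

namespace ReidSuzukiAux

variable (K : Type*) [Field K]

/-- The monomial curve map `Y,Z,T,U₁,U₂ ↦ s²,s³,s⁴,s⁵,s⁵`. -/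
noncomputable def gv : Fin 5 → Polynomial K :=
  ![Polynomial.X ^ 2, Polynomial.X ^ 3, Polynomial.X ^ 4, Polynomial.X ^ 5, Polynomial.X ^ 5]

noncomputable def φ : MvPolynomial (Fin 5) K →ₐ[K] Polynomial K := aeval (gv K)

noncomputable def J0 : Ideal (MvPolynomial (Fin 5) K) :=
  Ideal.span {X 1 ^ 2 - X 0 ^ 3, X 2 - X 0 ^ 2, X 3 - X 0 * X 1, X 4 - X 0 * X 1}

lemma mem1 : (X 1 ^ 2 - X 0 ^ 3 : MvPolynomial (Fin 5) K) ∈ J0 K :=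
  Ideal.subset_span (by simp)

lemma mem2 : (X 2 - X 0 ^ 2 : MvPolynomial (Fin 5) K) ∈ J0 K :=
  Ideal.subset_span (by simp)

lemma mem3 : (X 3 - X 0 * X 1 : MvPolynomial (Fin 5) K) ∈ J0 K :=
  Ideal.subset_span (by simp)

lemma mem4 : (X 4 - X 0 * X 1 : MvPolynomial (Fin 5) K) ∈ J0 K :=
  Ideal.subset_span (by simp)

/-- Every polynomial is congruent mod `J0` to `P(y) + Q(y)·z`. -/
lemma reduce (f : MvPolynomial (Fin 5) K) :
    ∃ P Q : Polynomial K,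
      f - (Polynomial.aeval (X 0 : MvPolynomial (Fin 5) K) P
        + Polynomial.aeval (X 0 : MvPolynomial (Fin 5) K) Q * X 1) ∈ J0 K := by
  induction f using MvPolynomial.induction_on with
  | C a => exact ⟨Polynomial.C a, 0, by simp⟩
  | add p q hp hq =>
      obtain ⟨P1, Q1, h1⟩ := hp
      obtain ⟨P2, Q2, h2⟩ := hq
      refine ⟨P1 + P2, Q1 + Q2, ?_⟩
      have h3 : p + q - (Polynomial.aeval (X 0 : MvPolynomial (Fin 5) K) (P1 + P2)
          + Polynomial.aeval (X 0 : MvPolynomial (Fin 5) K) (Q1 + Q2) * X 1)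
          = (p - (Polynomial.aeval (X 0 : MvPolynomial (Fin 5) K) P1
              + Polynomial.aeval (X 0 : MvPolynomial (Fin 5) K) Q1 * X 1))
            + (q - (Polynomial.aeval (X 0 : MvPolynomial (Fin 5) K) P2
              + Polynomial.aeval (X 0 : MvPolynomial (Fin 5) K) Q2 * X 1)) := by
        simp only [map_add]; ring
      rw [h3]; exact Ideal.add_mem _ h1 h2
  | mul_X p i hp =>
      obtain ⟨P, Q, h⟩ := hp
      fin_cases i
      · refine ⟨Polynomial.X * P, Polynomial.X * Q, ?_⟩
        show p * X 0 - _ ∈ J0 K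
        have h3 : p * X 0 - (Polynomial.aeval (X 0 : MvPolynomial (Fin 5) K) (Polynomial.X * P)
            + Polynomial.aeval (X 0 : MvPolynomial (Fin 5) K) (Polynomial.X * Q) * X 1)
            = (p - (Polynomial.aeval (X 0 : MvPolynomial (Fin 5) K) P
              + Polynomial.aeval (X 0 : MvPolynomial (Fin 5) K) Q * X 1)) * X 0 := by
          simp only [map_mul, Polynomial.aeval_X]; ring
        rw [h3]; exact Ideal.mul_mem_right _ _ h
      · refine ⟨Polynomial.X ^ 3 * Q, P, ?_⟩
        show p * X 1 - _ ∈ J0 K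
        have h3 : p * X 1 - (Polynomial.aeval (X 0 : MvPolynomial (Fin 5) K) (Polynomial.X ^ 3 * Q)
            + Polynomial.aeval (X 0 : MvPolynomial (Fin 5) K) P * X 1)
            = (p - (Polynomial.aeval (X 0 : MvPolynomial (Fin 5) K) P
              + Polynomial.aeval (X 0 : MvPolynomial (Fin 5) K) Q * X 1)) * X 1
              + Polynomial.aeval (X 0 : MvPolynomial (Fin 5) K) Q * (X 1 ^ 2 - X 0 ^ 3) := by
          simp only [map_mul, map_pow, Polynomial.aeval_X]; ring
        rw [h3]
        exact Ideal.add_mem _ (Ideal.mul_mem_right _ _ h) (Ideal.mul_mem_left _ _ (mem1 K))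
      · refine ⟨Polynomial.X ^ 2 * P, Polynomial.X ^ 2 * Q, ?_⟩
        show p * X 2 - _ ∈ J0 K
        have h3 : p * X 2 - (Polynomial.aeval (X 0 : MvPolynomial (Fin 5) K) (Polynomial.X ^ 2 * P)
            + Polynomial.aeval (X 0 : MvPolynomial (Fin 5) K) (Polynomial.X ^ 2 * Q) * X 1)
            = (p - (Polynomial.aeval (X 0 : MvPolynomial (Fin 5) K) P
              + Polynomial.aeval (X 0 : MvPolynomial (Fin 5) K) Q * X 1)) * X 2
              + (Polynomial.aeval (X 0 : MvPolynomial (Fin 5) K) P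
              + Polynomial.aeval (X 0 : MvPolynomial (Fin 5) K) Q * X 1) * (X 2 - X 0 ^ 2) := by
          simp only [map_mul, map_pow, Polynomial.aeval_X]; ring
        rw [h3]
        exact Ideal.add_mem _ (Ideal.mul_mem_right _ _ h) (Ideal.mul_mem_left _ _ (mem2 K))
      · refine ⟨Polynomial.X ^ 4 * Q, Polynomial.X * P, ?_⟩
        show p * X 3 - _ ∈ J0 K
        have h3 : p * X 3 - (Polynomial.aeval (X 0 : MvPolynomial (Fin 5) K) (Polynomial.X ^ 4 * Q)
            + Polynomial.aeval (X 0 : MvPolynomial (Fin 5) K) (Polynomial.X * P) * X 1)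
            = (p - (Polynomial.aeval (X 0 : MvPolynomial (Fin 5) K) P
              + Polynomial.aeval (X 0 : MvPolynomial (Fin 5) K) Q * X 1)) * X 3
              + (Polynomial.aeval (X 0 : MvPolynomial (Fin 5) K) P
              + Polynomial.aeval (X 0 : MvPolynomial (Fin 5) K) Q * X 1) * (X 3 - X 0 * X 1)
              + Polynomial.aeval (X 0 : MvPolynomial (Fin 5) K) Q * X 0 * (X 1 ^ 2 - X 0 ^ 3) := by
          simp only [map_mul, map_pow, Polynomial.aeval_X]; ring
        rw [h3]
        exact Ideal.add_mem _ (Ideal.add_mem _ (Ideal.mul_mem_right _ _ h)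
          (Ideal.mul_mem_left _ _ (mem3 K))) (Ideal.mul_mem_left _ _ (mem1 K))
      · refine ⟨Polynomial.X ^ 4 * Q, Polynomial.X * P, ?_⟩
        show p * X 4 - _ ∈ J0 K
        have h3 : p * X 4 - (Polynomial.aeval (X 0 : MvPolynomial (Fin 5) K) (Polynomial.X ^ 4 * Q)
            + Polynomial.aeval (X 0 : MvPolynomial (Fin 5) K) (Polynomial.X * P) * X 1)
            = (p - (Polynomial.aeval (X 0 : MvPolynomial (Fin 5) K) P
              + Polynomial.aeval (X 0 : MvPolynomial (Fin 5) K) Q * X 1)) * X 4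
              + (Polynomial.aeval (X 0 : MvPolynomial (Fin 5) K) P
              + Polynomial.aeval (X 0 : MvPolynomial (Fin 5) K) Q * X 1) * (X 4 - X 0 * X 1)
              + Polynomial.aeval (X 0 : MvPolynomial (Fin 5) K) Q * X 0 * (X 1 ^ 2 - X 0 ^ 3) := by
          simp only [map_mul, map_pow, Polynomial.aeval_X]; ring
        rw [h3]
        exact Ideal.add_mem _ (Ideal.add_mem _ (Ideal.mul_mem_right _ _ h)
          (Ideal.mul_mem_left _ _ (mem4 K))) (Ideal.mul_mem_left _ _ (mem1 K))

lemma expand_eq_zero' (P Q : Polynomial K)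
    (h : Polynomial.expand K 2 P + Polynomial.expand K 2 Q * Polynomial.X ^ 3 = 0) :
    P = 0 ∧ Q = 0 := by
  have hP : P = 0 := by
    ext n
    have hc := congrArg (fun r => Polynomial.coeff r (2 * n)) h
    simp only [Polynomial.coeff_add, Polynomial.coeff_zero] at hc
    rw [Polynomial.coeff_expand two_pos, Polynomial.coeff_mul_X_pow',
      if_pos ⟨n, rfl⟩, Nat.mul_div_cancel_left n two_pos] at hc
    by_cases h3 : 3 ≤ 2 * n
    · rw [if_pos h3, Polynomial.coeff_expand two_pos, if_neg (by omega)] at hc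
      simpa using hc
    · rw [if_neg h3] at hc
      simpa using hc
  refine ⟨hP, ?_⟩
  rw [hP, map_zero, zero_add] at h
  rcases mul_eq_zero.mp h with h' | h'
  · exact (Polynomial.expand_eq_zero two_pos).mp h'
  · exact absurd h' (pow_ne_zero _ Polynomial.X_ne_zero)

lemma J0_le_ker : J0 K ≤ RingHom.ker (φ K).toRingHom := by
  rw [J0, Ideal.span_le]
  intro a ha
  simp only [Set.mem_insert_iff, Set.mem_singleton_iff] at ha
  rcases ha with rfl | rfl | rfl | rfl <;>
    · simp only [SetLike.mem_coe, RingHom.mem_ker, AlgHom.toRingHom_eq_coe, RingHom.coe_coe, φ, map_sub, map_mul,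
        map_pow, aeval_X, gv, Matrix.cons_val_zero, Matrix.cons_val_one, Matrix.head_cons,
        Matrix.cons_val_two, Matrix.tail_cons, Matrix.cons_val_three, Matrix.cons_val_four]
      ring

lemma ker_le_J0 : RingHom.ker (φ K).toRingHom ≤ J0 K := by
  intro f hf
  obtain ⟨P, Q, hm⟩ := reduce K f
  have hfm : (φ K) f = 0 := hf
  have hd : (φ K) (f - (Polynomial.aeval (X 0 : MvPolynomial (Fin 5) K) P
      + Polynomial.aeval (X 0 : MvPolynomial (Fin 5) K) Q * X 1)) = 0 := J0_le_ker K hm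
  have hx0 : (φ K) (X 0) = Polynomial.X ^ 2 := by
    simp [φ, gv]
  have hx1 : (φ K) (X 1) = Polynomial.X ^ 3 := by
    simp [φ, gv]
  have hrep : Polynomial.expand K 2 P + Polynomial.expand K 2 Q * Polynomial.X ^ 3 = 0 := by
    have e1 : (φ K) (Polynomial.aeval (X 0 : MvPolynomial (Fin 5) K) P)
        = Polynomial.expand K 2 P := by
      rw [Polynomial.expand_eq_comp_X_pow, Polynomial.comp_eq_aeval, ← hx0,
        Polynomial.aeval_algHom_apply]
    have e2 : (φ K) (Polynomial.aeval (X 0 : MvPolynomial (Fin 5) K) Q)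
        = Polynomial.expand K 2 Q := by
      rw [Polynomial.expand_eq_comp_X_pow, Polynomial.comp_eq_aeval, ← hx0,
        Polynomial.aeval_algHom_apply]
    rw [map_sub, map_add, map_mul, e1, e2, hx1, hfm] at hd
    linear_combination -hd
  obtain ⟨hP, hQ⟩ := expand_eq_zero' K P Q hrep
  rw [hP, hQ] at hm
  simpa using hm

end ReidSuzukiAux

/-- in the Reid--Suzuki ring
`O_X = K[Y,Z,T,U₁,U₂]/(Z²-YT, ZT-YU₁, Y⁴-ZU₂, T²-ZU₁, Y³Z-TU₂, Y³T-U₁U₂)`,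
the ideal `I_D = (z²-y³, t-y², u₁-yz, u₂-yz)` is prime (it is the ideal of the
point `[1,1,1,1,1]` of `Proj O_X ⊆ P(2,3,4,5,5)`).
(Variables: `0 = Y, 1 = Z, 2 = T, 3 = U₁, 4 = U₂`.) -/
theorem reid_suzuki_ID_prime
    (K : Type*) [Field K]
    (I : Ideal (MvPolynomial (Fin 5) K))
    (hI : I = Ideal.span {X 1 ^ 2 - X 0 * X 2, X 1 * X 2 - X 0 * X 3,
      X 0 ^ 4 - X 1 * X 4, X 2 ^ 2 - X 1 * X 3,
      X 0 ^ 3 * X 1 - X 2 * X 4, X 0 ^ 3 * X 2 - X 3 * X 4})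
    (ID : Ideal (MvPolynomial (Fin 5) K ⧸ I))
    (hID : ID = Ideal.span {Ideal.Quotient.mk I (X 1 ^ 2 - X 0 ^ 3),
      Ideal.Quotient.mk I (X 2 - X 0 ^ 2),
      Ideal.Quotient.mk I (X 3 - X 0 * X 1),
      Ideal.Quotient.mk I (X 4 - X 0 * X 1)}) :
    ID.IsPrime := by
  classical
  have hIker : I ≤ RingHom.ker (ReidSuzukiAux.φ K).toRingHom := by
    rw [hI, Ideal.span_le]
    intro a ha
    simp only [Set.mem_insert_iff, Set.mem_singleton_iff] at ha
    rcases ha with rfl | rfl | rfl | rfl | rfl | rfl <;>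
      · simp only [SetLike.mem_coe, RingHom.mem_ker, AlgHom.toRingHom_eq_coe, RingHom.coe_coe, ReidSuzukiAux.φ,
          map_sub, map_mul, map_pow, aeval_X, ReidSuzukiAux.gv, Matrix.cons_val_zero,
          Matrix.cons_val_one, Matrix.head_cons, Matrix.cons_val_two, Matrix.tail_cons,
          Matrix.cons_val_three, Matrix.cons_val_four]
        ring
  have hsup : I ⊔ ReidSuzukiAux.J0 K = RingHom.ker (ReidSuzukiAux.φ K).toRingHom :=
    le_antisymm (sup_le hIker (ReidSuzukiAux.J0_le_ker K))
      (le_trans (ReidSuzukiAux.ker_le_J0 K) le_sup_right)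
  have hprime : (I ⊔ ReidSuzukiAux.J0 K).IsPrime := by
    rw [hsup]; exact RingHom.ker_isPrime _
  have hmap : ID = Ideal.map (Ideal.Quotient.mk I) (I ⊔ ReidSuzukiAux.J0 K) := by
    rw [Ideal.map_sup, Ideal.map_quotient_self, bot_sup_eq, hID, ReidSuzukiAux.J0,
      Ideal.map_span]
    congr 1
    simp only [Set.image_insert_eq, Set.image_singleton]
  rw [hmap]
  haveI := hprime
  exact Ideal.map_isPrime_of_surjective Ideal.Quotient.mk_surjective
    (by rw [Ideal.mk_ker]; exact le_sup_left)
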